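/- arXiv:1808.05183 — 2 statements merged into one kernel-verified Lean document; each statement's English description precedes it below -/
import Mathlib

section
/- Let N and M be positive integers, and for each edge index e ∈ Fin M let s(e), t(e) ∈ Fin N, k_e ≥ 0, and l_e ∈ ℝ. Let φ be a continuous linear functional on the product space (Fin N → EuclideanSpace ℝ (Fin 3)). Then the total energy V(r) = −φ(r) + Σ_{e ∈ Fin M} (k_e/2)·(max(‖r_{s(e)} − r_{t(e)}‖ − l_e, 0))² is a convex function of the configuration r : Fin N → EuclideanSpace ℝ (Fin 3). -/
/-- Convexity of the total energy of the cable net: the sum of a linear potential term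
`−φ(r)` and the elastic energies `(k_e/2)·((‖r_{s(e)} − r_{t(e)}‖ − l_e)₊)²` of all
edges is convex in the configuration `r`. -/
theorem stmt9 (N M : ℕ) (hN : 0 < N) (hM : 0 < M)
    (s t : Fin M → Fin N) (k : Fin M → ℝ) (hk : ∀ e, 0 ≤ k e) (l : Fin M → ℝ)
    (φ : (Fin N → EuclideanSpace ℝ (Fin 3)) →L[ℝ] ℝ) :
    ConvexOn ℝ Set.univ (fun r : Fin N → EuclideanSpace ℝ (Fin 3) =>
      -φ r + ∑ e : Fin M, (k e / 2) * (max (‖r (s e) - r (t e)‖ - l e) 0) ^ 2) := by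
  have hlin : ConvexOn ℝ Set.univ (fun r : Fin N → EuclideanSpace ℝ (Fin 3) => -φ r) := by
    exact (φ.toLinearMap.concaveOn convex_univ).neg
  refine hlin.add ?_
  have hsum : ∀ e : Fin M, ConvexOn ℝ Set.univ
      (fun r : Fin N → EuclideanSpace ℝ (Fin 3) =>
        (k e / 2) * (max (‖r (s e) - r (t e)‖ - l e) 0) ^ 2) := by
    intro e
    have hnorm : ConvexOn ℝ Set.univ
        (fun r : Fin N → EuclideanSpace ℝ (Fin 3) => ‖r (s e) - r (t e)‖ - l e) := by
      refine ⟨convex_univ, fun x _ y _ a b ha hb hab => ?_⟩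
      have : (a • x + b • y) (s e) - (a • x + b • y) (t e)
          = a • (x (s e) - x (t e)) + b • (y (s e) - y (t e)) := by
        simp [smul_sub]; abel
      dsimp only
      rw [this]
      calc ‖a • (x (s e) - x (t e)) + b • (y (s e) - y (t e))‖ - l e
          ≤ (a * ‖x (s e) - x (t e)‖ + b * ‖y (s e) - y (t e)‖) - l e := by
            gcongr
            calc ‖a • (x (s e) - x (t e)) + b • (y (s e) - y (t e))‖
                ≤ ‖a • (x (s e) - x (t e))‖ + ‖b • (y (s e) - y (t e))‖ := norm_add_le _ _
              _ = a * ‖x (s e) - x (t e)‖ + b * ‖y (s e) - y (t e)‖ := by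
                  rw [norm_smul, norm_smul, Real.norm_of_nonneg ha, Real.norm_of_nonneg hb]
        _ = a • (‖x (s e) - x (t e)‖ - l e) + b • (‖y (s e) - y (t e)‖ - l e) := by
            simp only [smul_eq_mul]; linear_combination (l e) * hab
    have hmax : ConvexOn ℝ Set.univ
        (fun r : Fin N → EuclideanSpace ℝ (Fin 3) => max (‖r (s e) - r (t e)‖ - l e) 0) :=
      hnorm.sup (convexOn_const 0 convex_univ)
    have hpow : ConvexOn ℝ Set.univ
        (fun r : Fin N → EuclideanSpace ℝ (Fin 3) =>
          (max (‖r (s e) - r (t e)‖ - l e) 0) ^ 2) := by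
      refine ⟨convex_univ, fun x hx y hy a b ha hb hab => ?_⟩
      have h1 := hmax.2 hx hy ha hb hab
      simp only [smul_eq_mul] at h1 ⊢
      have h0 : (0:ℝ) ≤ max (‖(a • x + b • y) (s e) - (a • x + b • y) (t e)‖ - l e) 0 :=
        le_max_right _ _
      have hFx : (0:ℝ) ≤ max (‖x (s e) - x (t e)‖ - l e) 0 := le_max_right _ _
      have hFy : (0:ℝ) ≤ max (‖y (s e) - y (t e)‖ - l e) 0 := le_max_right _ _
      nlinarith [sq_nonneg (max (‖x (s e) - x (t e)‖ - l e) 0 - max (‖y (s e) - y (t e)‖ - l e) 0),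
        mul_nonneg ha hb, mul_nonneg (mul_nonneg ha hb) (mul_nonneg hFx hFy)]
    have := ConvexOn.smul (𝕜 := ℝ) (c := k e / 2) (div_nonneg (hk e) (by norm_num)) hpow
    simpa [smul_eq_mul] using this
  classical
  have : ∀ (F : Finset (Fin M)), ConvexOn ℝ Set.univ
      (fun r : Fin N → EuclideanSpace ℝ (Fin 3) =>
        ∑ e ∈ F, (k e / 2) * (max (‖r (s e) - r (t e)‖ - l e) 0) ^ 2) := by
    intro F
    induction F using Finset.induction with
    | empty => simpa using convexOn_const 0 convex_univ
    | insert _ _ h ih =>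
      simp only [Finset.sum_insert h]
      exact (hsum _).add ih
  exact this Finset.univ
end

section
/- Let f : ℝᵖ → ℝ be continuously differentiable and bounded below, let 0 < c₁ < c₂ < 1, and suppose the gradient ∇f is Lipschitz continuous on an open set containing the level set {u : f(u) ≤ f(u₀)}. Let (u_k) be a sequence with u₀ as its initial point such that for each k: either ∇f(u_k) = 0 and u_{k+1} = u_k, or u_{k+1} = u_k + α_k p_k where p_k satisfies ∇f(u_k)ᵀ p_k < 0 and α_k > 0 satisfies the Wolfe conditions f(u_{k+1}) ≤ f(u_k) + c₁ α_k ∇f(u_k)ᵀ p_k and ∇f(u_{k+1})ᵀ p_k ≥ c₂ ∇f(u_k)ᵀ p_k. Then the Zoutendijk condition holds: Σ_{k=0}^{∞} cos²θ_k · ‖∇f(u_k)‖² < ∞, where cos θ_k = −∇f(u_k)ᵀ p_k / (‖∇f(u_k)‖ · ‖p_k‖) on the steps with ∇f(u_k) ≠ 0 (those terms being taken as 0 otherwise). -/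
open RealInnerProductSpace Classical

set_option maxHeartbeats 1600000 in
/-- Zoutendijk's condition: for a line-search method with Wolfe step lengths on a
continuously differentiable, bounded-below objective whose gradient is Lipschitz on an
open set containing the initial level set, the series `Σ cos²θ_k ‖∇f(u_k)‖²` converges. -/
theorem stmt15 (q : ℕ) (f : EuclideanSpace ℝ (Fin q) → ℝ)
    (hf : ContDiff ℝ 1 f) (hbdd : BddBelow (Set.range f))
    (c₁ c₂ : ℝ) (hc₁ : 0 < c₁) (hc₁₂ : c₁ < c₂) (hc₂ : c₂ < 1)
    (S : Set (EuclideanSpace ℝ (Fin q))) (hS : IsOpen S)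
    (K : NNReal) (hlip : LipschitzOnWith K (fun x => gradient f x) S)
    (u p : ℕ → EuclideanSpace ℝ (Fin q)) (α : ℕ → ℝ)
    (hlev : {x | f x ≤ f (u 0)} ⊆ S)
    (hstep : ∀ k : ℕ,
      (gradient f (u k) = 0 ∧ u (k + 1) = u k) ∨
      (⟪gradient f (u k), p k⟫ < 0 ∧ 0 < α k ∧ u (k + 1) = u k + α k • p k ∧
        f (u (k + 1)) ≤ f (u k) + c₁ * α k * ⟪gradient f (u k), p k⟫ ∧
        c₂ * ⟪gradient f (u k), p k⟫ ≤ ⟪gradient f (u (k + 1)), p k⟫)) :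
    Summable (fun k : ℕ =>
      if gradient f (u k) = 0 then (0 : ℝ)
      else (-⟪gradient f (u k), p k⟫ / (‖gradient f (u k)‖ * ‖p k‖)) ^ 2
        * ‖gradient f (u k)‖ ^ 2) := by

  obtain ⟨B, hB⟩ := hbdd
  have hBle : ∀ x, B ≤ f x := fun x => hB (Set.mem_range_self x)
  have hmono : ∀ k, f (u (k + 1)) ≤ f (u k) := by
    intro k
    rcases hstep k with ⟨_, h⟩ | ⟨hg, hα, hu, harm, _⟩
    · rw [h]
    · nlinarith [mul_pos hc₁ hα]
  have hle0 : ∀ k, f (u k) ≤ f (u 0) := by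
    intro k
    induction k with
    | zero => exact le_refl _
    | succ n ih => exact (hmono n).trans ih
  have hmem : ∀ k, u k ∈ S := fun k => hlev (hle0 k)
  set C := (K : ℝ) / (c₁ * (1 - c₂)) with hC
  have hCnn : 0 ≤ C := div_nonneg K.coe_nonneg (by nlinarith)
  have key : ∀ k,
      (if gradient f (u k) = 0 then (0 : ℝ)
        else (-⟪gradient f (u k), p k⟫ / (‖gradient f (u k)‖ * ‖p k‖)) ^ 2
          * ‖gradient f (u k)‖ ^ 2) ≤ C * (f (u k) - f (u (k + 1))) := by
    intro k
    rcases hstep k with ⟨h0, h1⟩ | ⟨hg, hα, hu, harm, hcurv⟩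
    · rw [if_pos h0, h1]
      simp
    · have hgrad0 : gradient f (u k) ≠ 0 := by
        intro h; rw [h, inner_zero_left] at hg; exact lt_irrefl 0 hg
      have hp0 : p k ≠ 0 := by
        intro h; rw [h, inner_zero_right] at hg; exact lt_irrefl 0 hg
      rw [if_neg hgrad0]
      have hgn : (0:ℝ) < ‖gradient f (u k)‖ := norm_pos_iff.2 hgrad0
      have hpn : (0:ℝ) < ‖p k‖ := norm_pos_iff.2 hp0
      set g : ℝ := ⟪gradient f (u k), p k⟫ with hgdef
      have hdist : dist (gradient f (u (k+1))) (gradient f (u k))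
          ≤ K * dist (u (k+1)) (u k) := hlip.dist_le_mul _ (hmem (k+1)) _ (hmem k)
      have hdeq : dist (u (k+1)) (u k) = α k * ‖p k‖ := by
        rw [hu, dist_eq_norm]
        simp [norm_smul, abs_of_pos hα]
      have hcs : ⟪gradient f (u (k+1)) - gradient f (u k), p k⟫
          ≤ ‖gradient f (u (k+1)) - gradient f (u k)‖ * ‖p k‖ :=
        real_inner_le_norm _ _
      have hnd : ‖gradient f (u (k+1)) - gradient f (u k)‖
          ≤ K * (α k * ‖p k‖) := by
        rw [← dist_eq_norm]; rw [hdeq] at hdist; exact hdist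
      have hsub : ⟪gradient f (u (k+1)) - gradient f (u k), p k⟫
          = ⟪gradient f (u (k+1)), p k⟫ - g := by
        rw [inner_sub_left]
      have h1 : (c₂ - 1) * g ≤ (K : ℝ) * (α k * ‖p k‖) * ‖p k‖ := by
        have := hcs.trans (mul_le_mul_of_nonneg_right hnd hpn.le)
        rw [hsub] at this
        nlinarith
      have hKpos : (0:ℝ) < K := by
        nlinarith [mul_pos (mul_pos hα hpn) hpn, mul_pos (sub_pos.2 hc₂) (neg_pos.2 hg)]
      have harm' : c₁ * α k * (-g) ≤ f (u k) - f (u (k+1)) := by nlinarith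
      have hterm : (-g / (‖gradient f (u k)‖ * ‖p k‖)) ^ 2
          * ‖gradient f (u k)‖ ^ 2 = g ^ 2 / ‖p k‖ ^ 2 := by
        field_simp
      have stepA : (c₁ * (-g)) * ((c₂ - 1) * g)
          ≤ (c₁ * (-g)) * ((K : ℝ) * (α k * ‖p k‖) * ‖p k‖) :=
        mul_le_mul_of_nonneg_left h1 (by nlinarith)
      have stepB : (c₁ * α k * (-g)) * ((K : ℝ) * ‖p k‖ ^ 2)
          ≤ (f (u k) - f (u (k+1))) * ((K : ℝ) * ‖p k‖ ^ 2) :=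
        mul_le_mul_of_nonneg_right harm' (by positivity)
      have hfinal : c₁ * (1 - c₂) * g ^ 2
          ≤ (K : ℝ) * (f (u k) - f (u (k+1))) * ‖p k‖ ^ 2 := by linarith [stepA, stepB]
      rw [hterm, hC, div_le_iff₀ (by positivity : (0:ℝ) < ‖p k‖ ^ 2),
        div_mul_eq_mul_div, div_mul_eq_mul_div,
        le_div_iff₀ (by nlinarith : (0:ℝ) < c₁ * (1 - c₂))]
      linarith [hfinal]
  apply summable_of_sum_range_le (c := C * (f (u 0) - B))
  · intro n
    split
    · exact le_refl _
    · positivity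
  · intro n
    calc ∑ i ∈ Finset.range n,
          (if gradient f (u i) = 0 then (0 : ℝ)
            else (-⟪gradient f (u i), p i⟫ / (‖gradient f (u i)‖ * ‖p i‖)) ^ 2
              * ‖gradient f (u i)‖ ^ 2) ≤ ∑ i ∈ Finset.range n, C * (f (u i) - f (u (i+1))) :=
          Finset.sum_le_sum fun i _ => key i
      _ = C * (f (u 0) - f (u n)) := by
          rw [← Finset.mul_sum, Finset.sum_range_sub' (fun i => f (u i))]
      _ ≤ C * (f (u 0) - B) := by
          apply mul_le_mul_of_nonneg_left _ hCnn
          linarith [hBle (u n)]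
end
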